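/- Let t, Δ, R, a be real numbers with t ≥ 1, Δ > 0, 0 < a ≤ (t+1)/2, and R < (t−1)·Δ. Then R·a/(t+1) < (t−a)·Δ. That is, an entity controlling a participants earns strictly less from a successful collusion (at most R·a/(t+1)) than from framing (which pays (t−a)·Δ), so framing is the dominant strategy for any entity controlling fewer than (t+1)/2 participants. -/
import Mathlib

/-- Framing dominance: an entity controlling `a ≤ (t+1)/2` participants earns
strictly less from collusion (`R·a/(t+1)`) than from framing (`(t−a)·Δ`),
provided `R < (t−1)·Δ`. -/
theorem framing_dominant (t Δ R a : ℝ)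
    (ht : t ≥ 1) (hΔ : Δ > 0) (ha0 : 0 < a) (ha : a ≤ (t + 1) / 2)
    (hR : R < (t - 1) * Δ) :
    R * a / (t + 1) < (t - a) * Δ := by
  have ht1 : (0:ℝ) < t + 1 := by linarith
  rw [div_lt_iff₀ ht1]
  nlinarith [mul_lt_mul_of_pos_right hR ha0, mul_nonneg (mul_nonneg (by linarith : (0:ℝ) ≤ t + 1 - 2 * a) (by linarith : (0:ℝ) ≤ t)) hΔ.le]
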